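/- For every n ≥ 2, the complete graph Kₙ does not admit an integer additive set-sequential labeling with respect to any ground set X. -/

import Mathlib

open Finset Pointwise

/-- The induced edge-label map: `f⁺(uv) = f(u) + f(v)` (sum set). -/
def edgeLabel {V : Type*} (f : V → Finset ℕ) : Sym2 V → Finset ℕ :=
  Sym2.lift ⟨fun u v => f u + f v, fun u v => add_comm (f u) (f v)⟩

/-- An integer additive set-labeling of `G` w.r.t. ground set `X`:
an injective assignment of nonempty subsets of `X` to the vertices. -/
def IsIASL {V : Type*} (X : Finset ℕ) (f : V → Finset ℕ) : Prop :=
  Function.Injective f ∧ (∀ v, (f v).Nonempty) ∧ (∀ v, f v ⊆ X)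

/-- An integer additive set-indexer: an IASL whose induced edge map is
injective on the edge set. -/
def IsIASI {V : Type*} (G : SimpleGraph V) (X : Finset ℕ) (f : V → Finset ℕ) : Prop :=
  IsIASL X f ∧ Set.InjOn (edgeLabel f) G.edgeSet

/-- The family of vertex labels. -/
def vertexLabels {V : Type*} (f : V → Finset ℕ) : Set (Finset ℕ) := Set.range f

/-- The family of edge labels. -/
def edgeLabels {V : Type*} (G : SimpleGraph V) (f : V → Finset ℕ) : Set (Finset ℕ) :=
  edgeLabel f '' G.edgeSet

/-- An integer additive set-sequential labeling: an IASI such that the vertex and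
edge labels together are exactly the nonempty subsets of `X`. -/
def IsIASSL {V : Type*} (G : SimpleGraph V) (X : Finset ℕ) (f : V → Finset ℕ) : Prop :=
  IsIASI G X f ∧
    vertexLabels f ∪ edgeLabels G f = {A : Finset ℕ | A ⊆ X ∧ A.Nonempty}

/-- An integer additive set-sequential indexer: an IASSL whose vertex labels and
edge labels are disjoint (equivalently, the combined map `f*` is injective). -/
def IsIASSI {V : Type*} (G : SimpleGraph V) (X : Finset ℕ) (f : V → Finset ℕ) : Prop :=
  IsIASSL G X f ∧ Disjoint (vertexLabels f) (edgeLabels G f)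

/-- A nonempty subset `A` of `X` is a non-trivial sum set in `X` if `A = B + C`
for nonempty subsets `B, C ⊆ X`, neither equal to `{0}`. -/
def IsNontrivialSumset (X A : Finset ℕ) : Prop :=
  ∃ B C : Finset ℕ, B.Nonempty ∧ C.Nonempty ∧ B ⊆ X ∧ C ⊆ X ∧
    B ≠ {0} ∧ C ≠ {0} ∧ A = B + C

/-- No complete graph `Kₙ` (`n ≥ 2`) admits an IASSL with respect to any ground set. -/
theorem complete_not_iassl (n : ℕ) (hn : 2 ≤ n) (X : Finset ℕ) (hX : X.Nonempty) :
    ¬ ∃ f : Fin n → Finset ℕ, IsIASSL (SimpleGraph.completeGraph (Fin n)) X f := by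
  rintro ⟨f, ⟨⟨⟨hinj, hne, hsub⟩, _hedge⟩, hcover⟩⟩
  haveI hnt : Nontrivial (Fin n) := Fin.nontrivial_iff_two_le.mpr hn
  -- every nonempty subset of X is a vertex label or an edge label
  have covers : ∀ A : Finset ℕ, A ⊆ X → A.Nonempty →
      (∃ u, f u = A) ∨ (∃ u v : Fin n, u ≠ v ∧ f u + f v = A) := by
    intro A hAX hA
    have hmem : A ∈ vertexLabels f ∪ edgeLabels (SimpleGraph.completeGraph (Fin n)) f := by
      rw [hcover]; exact ⟨hAX, hA⟩
    rcases hmem with h | h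
    · exact Or.inl h
    · obtain ⟨e, he, hA'⟩ := h
      induction e using Sym2.ind with
      | _ u v =>
        refine Or.inr ⟨u, v, ?_, hA'⟩
        simpa [SimpleGraph.completeGraph] using he
  -- every edge label is a subset of X
  have edge_sub : ∀ u v : Fin n, u ≠ v → f u + f v ⊆ X := by
    intro u v huv
    have hmem : f u + f v ∈ vertexLabels f ∪ edgeLabels (SimpleGraph.completeGraph (Fin n)) f := by
      right
      exact ⟨s(u, v), by simpa [SimpleGraph.completeGraph] using huv, rfl⟩
    rw [hcover] at hmem
    exact hmem.1
  set M := X.max' hX with hM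
  have hMX : M ∈ X := X.max'_mem hX
  by_cases hM0 : M = 0
  · -- then X = {0} and two distinct vertices get equal labels
    have hX0 : ∀ x ∈ X, x = 0 := by
      intro x hx
      have := X.le_max' x hx
      omega
    obtain ⟨a, b, hab⟩ := hnt.exists_pair_ne
    have hfa : f a = {0} := by
      rcases Finset.subset_singleton_iff.mp
        (fun x hx => Finset.mem_singleton.mpr (hX0 x (hsub a hx))) with h | h
      · exact absurd h (hne a).ne_empty
      · exact h
    have hfb : f b = {0} := by
      rcases Finset.subset_singleton_iff.mp
        (fun x hx => Finset.mem_singleton.mpr (hX0 x (hsub b hx))) with h | h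
      · exact absurd h (hne b).ne_empty
      · exact h
    exact hab (hinj (hfa.trans hfb.symm))
  · have hMpos : 0 < M := Nat.pos_of_ne_zero hM0
    -- Lemma A: no vertex label contains M
    have lemA : ∀ t : Fin n, M ∉ f t := by
      intro t hMt
      have key : ∀ v : Fin n, v ≠ t → f v = {0} := by
        intro v hv
        have hs := edge_sub t v (Ne.symm hv)
        have h0 : ∀ b ∈ f v, b = 0 := by
          intro b hb
          have hmem : M + b ∈ f t + f v := Finset.add_mem_add hMt hb
          have := X.le_max' _ (hs hmem)
          omega
        rcases Finset.subset_singleton_iff.mp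
          (fun b hb => Finset.mem_singleton.mpr (h0 b hb)) with h | h
        · exact absurd h (hne v).ne_empty
        · exact h
      obtain ⟨v₁, hv₁⟩ := exists_ne t
      have hall : ∀ u : Fin n, u = t ∨ u = v₁ := by
        intro u
        by_cases hu : u = t
        · exact Or.inl hu
        · exact Or.inr (hinj ((key u hu).trans (key v₁ hv₁).symm))
      have h0X : (0 : ℕ) ∈ X :=
        hsub v₁ (by rw [key v₁ hv₁]; exact Finset.mem_singleton_self 0)
      -- every label is f t or {0}
      have hlab : ∀ A : Finset ℕ, A ⊆ X → A.Nonempty → A = f t ∨ A = {0} := by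
        intro A hAX hA
        rcases covers A hAX hA with ⟨u, hu⟩ | ⟨u, v, huv, huvA⟩
        · rcases hall u with h | h
          · left; rw [← hu, h]
          · right; rw [← hu, h, key v₁ hv₁]
        · left
          rcases hall u with hu | hu <;> rcases hall v with hv | hv
          · exact absurd (hu.trans hv.symm) huv
          · rw [← huvA, hu, hv, key v₁ hv₁]; simp [Finset.add_singleton]
          · rw [← huvA, hu, hv, key v₁ hv₁]; simp [Finset.singleton_add]
          · exact absurd (hu.trans hv.symm) huv
      have hsubM : ({M} : Finset ℕ) ⊆ X := Finset.singleton_subset_iff.mpr hMX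
      have hsub0M : ({0, M} : Finset ℕ) ⊆ X := by
        intro x hx
        rcases Finset.mem_insert.mp hx with h | h
        · rwa [h]
        · rw [Finset.mem_singleton.mp h]; exact hMX
      have h1 := hlab {M} hsubM ⟨M, Finset.mem_singleton_self M⟩
      have h2 := hlab {0, M} hsub0M ⟨0, by simp⟩
      rcases h1 with h1 | h1
      · rcases h2 with h2 | h2
        · have h0m : (0 : ℕ) ∈ ({M} : Finset ℕ) := by
            rw [h1, ← h2]; simp
          simp only [Finset.mem_singleton] at h0m
          omega
        · have hm0 : M ∈ ({0} : Finset ℕ) := by rw [← h2]; simp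
          simp only [Finset.mem_singleton] at hm0
          omega
      · have hm0 : M ∈ ({0} : Finset ℕ) := by rw [← h1]; simp
        simp only [Finset.mem_singleton] at hm0
        omega
    -- X is an edge label, hence 0 ∈ X
    have h0X : (0 : ℕ) ∈ X := by
      rcases covers X Finset.Subset.rfl hX with ⟨u, hu⟩ | ⟨u, v, huv, huvX⟩
      · exact absurd (hu ▸ hMX) (lemA u)
      · have ha := (f u).min'_mem (hne u)
        have hb := (f v).min'_mem (hne v)
        have haX : (f u).min' (hne u) ∈ f u + f v := huvX ▸ hsub u ha
        obtain ⟨a', ha', b', hb', hab⟩ := Finset.mem_add.mp haX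
        have h1 : (f u).min' (hne u) ≤ a' := Finset.min'_le _ _ ha'
        have h2 : (f v).min' (hne v) ≤ b' := Finset.min'_le _ _ hb'
        have hb0 : (f v).min' (hne v) = 0 := by omega
        exact hsub v (hb0 ▸ hb)
    -- final contradiction via the set {0, M}
    have hsub0M : ({0, M} : Finset ℕ) ⊆ X := by
      intro x hx
      rcases Finset.mem_insert.mp hx with h | h
      · rwa [h]
      · rw [Finset.mem_singleton.mp h]; exact hMX
    rcases covers {0, M} hsub0M ⟨0, by simp⟩ with ⟨u, hu⟩ | ⟨u, v, huv, hsum⟩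
    · exact lemA u (by rw [hu]; simp)
    · have h0 : (0 : ℕ) ∈ f u + f v := by rw [hsum]; simp
      obtain ⟨a, ha, b, hb, hab⟩ := Finset.mem_add.mp h0
      have ha0 : a = 0 := by omega
      have hb0 : b = 0 := by omega
      have hfu : f u = {0} := by
        have h0sub : ∀ c ∈ f u, c = 0 := by
          intro c hc
          have : c + 0 ∈ f u + f v := Finset.add_mem_add hc (hb0 ▸ hb)
          rw [hsum] at this
          rcases Finset.mem_insert.mp this with h | h
          · omega
          · have hcM : c = M := by have := Finset.mem_singleton.mp h; omega
            exact absurd (hcM ▸ hc) (lemA u)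
        rcases Finset.subset_singleton_iff.mp
          (fun c hc => Finset.mem_singleton.mpr (h0sub c hc)) with h | h
        · exact absurd h (hne u).ne_empty
        · exact h
      have hfv : f v = {0} := by
        have h0sub : ∀ c ∈ f v, c = 0 := by
          intro c hc
          have : 0 + c ∈ f u + f v := Finset.add_mem_add (ha0 ▸ ha) hc
          rw [hsum] at this
          rcases Finset.mem_insert.mp this with h | h
          · omega
          · have hcM : c = M := by have := Finset.mem_singleton.mp h; omega
            exact absurd (hcM ▸ hc) (lemA v)
        rcases Finset.subset_singleton_iff.mp
          (fun c hc => Finset.mem_singleton.mpr (h0sub c hc)) with h | h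
        · exact absurd h (hne v).ne_empty
        · exact h
      exact huv (hinj (hfu.trans hfv.symm))
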